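/- Let v : 2^N → ℝ≥0 be a monotone valuation with v(∅)=0 on a finite set N, and let p ∈ ℝ^N_{≥0} be a price vector. Suppose S maximizes v(T) - Σ_{i∈T} p_i over all T ⊆ N. If (1) for every i ∈ S there exists T with i ∉ T and v(S) - p(S) = v(T) - p(T), and (2) for every i ∉ S and every T with i ∈ T, v(S) - p(S) ≥ v(T) - p(T\{i}), then p is a pure Nash equilibrium of the pricing game in which the buyer purchases S: no seller i can strictly increase his utility u_i(p) = p_i·1{i ∈ X(p)} by unilaterally changing p_i, for any demand-consistent decision map X with X(p)=S. -/

import Mathlib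

/-- If `S` is demanded at prices `p` and conditions (1) and (2) hold,
then `p` is a pure Nash equilibrium of the pricing game for any demand-consistent
decision map `X` with `X p = S`. -/
theorem stmt0 {n : ℕ} (v : Finset (Fin n) → ℝ)
    (hmono : ∀ S T : Finset (Fin n), S ⊆ T → v S ≤ v T)
    (hv0 : v ∅ = 0)
    (p : Fin n → ℝ) (hp : ∀ i, 0 ≤ p i)
    (S : Finset (Fin n))
    (hS : ∀ T : Finset (Fin n), v T - ∑ i ∈ T, p i ≤ v S - ∑ i ∈ S, p i)
    (h1 : ∀ i ∈ S, ∃ T : Finset (Fin n), i ∉ T ∧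
      v S - ∑ j ∈ S, p j = v T - ∑ j ∈ T, p j)
    (h2 : ∀ i ∉ S, ∀ T : Finset (Fin n), i ∈ T →
      v T - ∑ j ∈ T.erase i, p j ≤ v S - ∑ j ∈ S, p j)
    (X : (Fin n → ℝ) → Finset (Fin n))
    (hX : ∀ q : Fin n → ℝ, (∀ i, 0 ≤ q i) → ∀ T : Finset (Fin n),
      v T - ∑ i ∈ T, q i ≤ v (X q) - ∑ i ∈ X q, q i)
    (hXp : X p = S) :
    ∀ i : Fin n, ∀ q : ℝ, 0 ≤ q →
      (if i ∈ X (Function.update p i q) then q else 0) ≤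
      (if i ∈ X p then p i else 0) := by
  intro i q hq
  set p' := Function.update p i q with hp'
  have hsum_not : ∀ T : Finset (Fin n), i ∉ T → ∑ j ∈ T, p' j = ∑ j ∈ T, p j := by
    intro T hi
    refine Finset.sum_congr rfl fun j hj => ?_
    exact Function.update_of_ne (show j ≠ i from fun h => hi (h ▸ hj)) q p
  have hsum_in : ∀ T : Finset (Fin n), i ∈ T →
      ∑ j ∈ T, p' j = (∑ j ∈ T.erase i, p j) + q := by
    intro T hi
    simp only [hp']
    rw [← Finset.add_sum_erase _ _ hi, Function.update_self, add_comm]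
    congr 1
    refine Finset.sum_congr rfl fun j hj => ?_
    exact Function.update_of_ne (Finset.ne_of_mem_erase hj) q p
  have hp'nonneg : ∀ j, 0 ≤ p' j := by
    intro j
    by_cases h : j = i
    · subst h; simpa [hp'] using hq
    · simpa [hp', Function.update_of_ne h] using hp j
  rw [hXp]
  by_cases hiS : i ∈ S
  · simp only [hiS, if_true]
    by_cases hiX : i ∈ X p'
    · simp only [hiX, if_true]
      by_contra hlt
      push_neg at hlt
      obtain ⟨T, hiT, hT⟩ := h1 i hiS
      have h₁ : v T - ∑ j ∈ T, p' j ≤ v (X p') - ∑ j ∈ X p', p' j := hX p' hp'nonneg T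
      rw [hsum_not T hiT, hsum_in (X p') hiX] at h₁
      have h₂ : v (X p') - ∑ j ∈ X p', p j ≤ v S - ∑ j ∈ S, p j := hS _
      have h₃ : ∑ j ∈ X p', p j = (∑ j ∈ (X p').erase i, p j) + p i := by
        rw [← Finset.add_sum_erase _ _ hiX, add_comm]
      rw [hT, h₃] at h₂
      linarith
    · simp [hiX, hp i]
  · simp only [hiS, if_false]
    by_cases hiX : i ∈ X p'
    · simp only [hiX, if_true]
      by_contra hq'
      push_neg at hq'
      have h₁ : v S - ∑ j ∈ S, p' j ≤ v (X p') - ∑ j ∈ X p', p' j := hX p' hp'nonneg S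
      rw [hsum_not S hiS, hsum_in (X p') hiX] at h₁
      have h₂ := h2 i hiS (X p') hiX
      linarith
    · simp [hiX]
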